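/- Fix a positive integer l, a constant c̄ > 0, and let g : ℝ → ℝ satisfy g(T) > T for all large T. Assume: (i) ∫_T^{g(T)} |ζ(1/2+it)|² dt / ∫_T^{g(T)} |S₁(t)|^{2l} dt = (1/c̄)·ln T + O(1) as T → ∞; (ii) (t_ν) is a Gram sequence satisfying the Titchmarsh-sum asymptotic. Then as T → ∞: (∫_T^{g(T)} |S₁(t)|^{2l} dt)⁵ · (∫_T^{g(T)} |ζ(1/2+it)|² dt)^{−5} · Σ_{ν : T ≤ t_ν ≤ 2T} |ζ(1/2 + i t_ν)|²·|ζ(1/2 + i t_{ν+1})|² = (3·c̄⁵/(4π⁵))·T·(1 + O(1/ln T)). -/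

import Mathlib

open Filter Topology MeasureTheory

/-- |ζ(σ+it)|² -/
noncomputable def zsq (σ : ℝ) (t : ℝ) : ℝ :=
  ‖riemannZeta (↑σ + ↑t * Complex.I)‖ ^ 2

/-- S₁(t) = (1/π)·∫₀^t arg ζ(1/2 + iu) du -/
noncomputable def S1 (t : ℝ) : ℝ :=
  (1 / Real.pi) * ∫ u in (0:ℝ)..t, Complex.arg (riemannZeta (1/2 + ↑u * Complex.I))

/-- Riemann–Siegel theta function θ(t) = Im log Γ(1/4 + it/2) − (t/2)·ln π. -/
noncomputable def RStheta (t : ℝ) : ℝ :=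
  (Complex.log (Complex.Gamma (1/4 + (↑t/2) * Complex.I))).im - (t/2) * Real.log Real.pi

/-- A Gram sequence: strictly increasing positive reals tending to ∞ with θ(t_ν) = π·ν. -/
def IsGramSeq (tν : ℕ → ℝ) : Prop :=
  StrictMono tν ∧ (∀ ν : ℕ, 1 ≤ ν → 0 < tν ν) ∧ Filter.Tendsto tν Filter.atTop Filter.atTop ∧
    ∀ ν : ℕ, 1 ≤ ν → RStheta (tν ν) = Real.pi * ν

/-- Titchmarsh sum Σ_{T ≤ t_ν ≤ 2T} |ζ(1/2+it_ν)|²·|ζ(1/2+it_{ν+1})|². -/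
noncomputable def TitchSum (tν : ℕ → ℝ) (T : ℝ) : ℝ :=
  ∑' ν : ℕ, if T ≤ tν ν ∧ tν ν ≤ 2 * T then zsq (1/2) (tν ν) * zsq (1/2) (tν (ν+1)) else 0

/-- The Titchmarsh-sum asymptotic (Moser 1991):
Σ_{T ≤ t_ν ≤ 2T} |ζ(1/2+it_ν)|²|ζ(1/2+it_{ν+1})|² = (3/(4π⁵))·T·ln⁵T·(1+O(1/ln T)). -/
def TitchAsymp (tν : ℕ → ℝ) : Prop :=
  ∃ C : ℝ, ∀ᶠ T in Filter.atTop,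
    |TitchSum tν T / (3 / (4 * Real.pi ^ 5) * T * Real.log T ^ 5) - 1| ≤ C / Real.log T

theorem crossbreed_S1_formula (l : ℕ) (hl : 0 < l) (cbar : ℝ) (hcbar : 0 < cbar)
    (g : ℝ → ℝ) (hg : ∀ᶠ T in atTop, T < g T)
    (hquot : ∃ C : ℝ, ∀ᶠ T in atTop,
      |(∫ t in T..(g T), zsq (1/2) t) / (∫ t in T..(g T), |S1 t| ^ (2 * l)) -
        (1 / cbar) * Real.log T| ≤ C)
    (tν : ℕ → ℝ) (hgram : IsGramSeq tν) (htitch : TitchAsymp tν) :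
    ∃ C : ℝ, ∀ᶠ T in atTop,
      |(∫ t in T..(g T), |S1 t| ^ (2 * l)) ^ 5 * ((∫ t in T..(g T), zsq (1/2) t) ^ 5)⁻¹ *
          TitchSum tν T /
        (3 * cbar ^ 5 / (4 * Real.pi ^ 5) * T) - 1| ≤ C / Real.log T := by
  obtain ⟨C₁, hq⟩ := hquot
  obtain ⟨C₂, ht⟩ := htitch
  have hC₁ : 0 ≤ C₁ := by
    obtain ⟨T, hT⟩ := hq.exists
    exact le_trans (abs_nonneg _) hT
  have hC₂ : 0 ≤ C₂ := by
    obtain ⟨T, hT, hL⟩ :=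
      (ht.and (Real.tendsto_log_atTop.eventually_ge_atTop 1)).exists
    have h0 : 0 ≤ C₂ / Real.log T := le_trans (abs_nonneg _) hT
    rcases div_nonneg_iff.mp h0 with ⟨h, _⟩ | ⟨_, h⟩
    · exact h
    · linarith
  refine ⟨32 * (C₂ + 26 * (cbar * C₁)), ?_⟩
  filter_upwards [hq, ht,
    Real.tendsto_log_atTop.eventually_ge_atTop (cbar * (2 * C₁ + 2)),
    Real.tendsto_log_atTop.eventually_ge_atTop (2 * C₂),
    Real.tendsto_log_atTop.eventually_ge_atTop 1,
    eventually_ge_atTop (1 : ℝ)] with T hqT htT hL1 hL2 hL3 hT1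
  set L : ℝ := Real.log T with hLdef
  set Z : ℝ := ∫ t in T..(g T), zsq (1/2) t with hZdef
  set I : ℝ := ∫ t in T..(g T), |S1 t| ^ (2 * l) with hIdef
  set S : ℝ := TitchSum tν T with hSdef
  have hLpos : 0 < L := lt_of_lt_of_le one_pos hL3
  have hTpos : 0 < T := lt_of_lt_of_le one_pos hT1
  have hLcb : 2 * C₁ + 2 ≤ L / cbar := by
    rw [le_div_iff₀ hcbar]; nlinarith
  have hZI : 0 < Z / I := by
    have := abs_le.mp hqT
    have h1 : 1 / cbar * L = L / cbar := by ring
    nlinarith [this.1, this.2]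
  have hI : I ≠ 0 := by
    intro h; rw [h, div_zero] at hZI; exact lt_irrefl 0 hZI
  have hZ : Z ≠ 0 := by
    intro h; rw [h, zero_div] at hZI; exact lt_irrefl 0 hZI
  set A : ℝ := Z / I * cbar / L with hAdef
  set B : ℝ := S / (3 / (4 * Real.pi ^ 5) * T * L ^ 5) with hBdef
  have hεbound : |A - 1| ≤ cbar * C₁ / L := by
    have h1 : A - 1 = (Z / I - 1 / cbar * L) * (cbar / L) := by
      rw [hAdef]; field_simp
    rw [h1, abs_mul, abs_of_pos (div_pos hcbar hLpos)]
    calc |Z / I - 1 / cbar * L| * (cbar / L) ≤ C₁ * (cbar / L) := by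
          exact mul_le_mul_of_nonneg_right hqT (le_of_lt (div_pos hcbar hLpos))
      _ = cbar * C₁ / L := by ring
  have hεhalf : |A - 1| ≤ 1 / 2 := by
    refine le_trans hεbound ?_
    rw [div_le_iff₀ hLpos]; nlinarith
  have hAlo : 1 / 2 ≤ A := by have := abs_le.mp hεhalf; linarith
  have hAhi : A ≤ 3 / 2 := by have := abs_le.mp hεhalf; linarith
  have hApos : 0 < A := by linarith
  have hsbound : |B - 1| ≤ C₂ / L := htT
  have hA5pos : 0 < A ^ 5 := by positivity
  have hA5lo : (1 : ℝ) / 32 ≤ A ^ 5 := by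
    calc (1 : ℝ) / 32 = (1 / 2) ^ 5 := by norm_num
      _ ≤ A ^ 5 := pow_le_pow_left₀ (by norm_num) hAlo 5
  have h26 : |A ^ 5 - 1| ≤ 26 * |A - 1| := by
    have hfac : A ^ 5 - 1 = (A - 1) * (A ^ 4 + A ^ 3 + A ^ 2 + A + 1) := by ring
    rw [hfac, abs_mul]
    have hA4 : A ^ 4 ≤ (3 / 2 : ℝ) ^ 4 := pow_le_pow_left₀ hApos.le hAhi 4
    have hA3 : A ^ 3 ≤ (3 / 2 : ℝ) ^ 3 := pow_le_pow_left₀ hApos.le hAhi 3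
    have hA2 : A ^ 2 ≤ (3 / 2 : ℝ) ^ 2 := pow_le_pow_left₀ hApos.le hAhi 2
    have hp4 : (0:ℝ) ≤ A ^ 4 := pow_nonneg hApos.le 4
    have hp3 : (0:ℝ) ≤ A ^ 3 := pow_nonneg hApos.le 3
    have hp2 : (0:ℝ) ≤ A ^ 2 := pow_nonneg hApos.le 2
    have hfb : |A ^ 4 + A ^ 3 + A ^ 2 + A + 1| ≤ 26 := by
      rw [abs_le]
      constructor
      · linarith
      · norm_num at hA4 hA3 hA2
        linarith
    calc |A - 1| * |A ^ 4 + A ^ 3 + A ^ 2 + A + 1| ≤ |A - 1| * 26 :=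
          mul_le_mul_of_nonneg_left hfb (abs_nonneg _)
      _ = 26 * |A - 1| := by ring
  have hLne : L ≠ 0 := ne_of_gt hLpos
  have hTne : T ≠ 0 := ne_of_gt hTpos
  have hpi : Real.pi ≠ 0 := Real.pi_ne_zero
  have hcb : cbar ≠ 0 := ne_of_gt hcbar
  have hE : I ^ 5 * (Z ^ 5)⁻¹ * S / (3 * cbar ^ 5 / (4 * Real.pi ^ 5) * T) = B / A ^ 5 := by
    rw [hAdef, hBdef]
    field_simp
  rw [hE]
  have hsplit : B / A ^ 5 - 1 = (B - A ^ 5) / A ^ 5 := by field_simp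
  rw [hsplit, abs_div, abs_of_pos hA5pos]
  have step1 : |B - A ^ 5| / A ^ 5 ≤ |B - A ^ 5| / (1 / 32) := by
    gcongr
  have step2 : |B - A ^ 5| ≤ C₂ / L + 26 * (cbar * C₁ / L) := by
    calc |B - A ^ 5| ≤ |B - 1| + |1 - A ^ 5| := abs_sub_le B 1 (A ^ 5)
      _ = |B - 1| + |A ^ 5 - 1| := by rw [abs_sub_comm 1 (A ^ 5)]
      _ ≤ C₂ / L + 26 * |A - 1| := by linarith
      _ ≤ C₂ / L + 26 * (cbar * C₁ / L) := by linarith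
  calc |B - A ^ 5| / A ^ 5 ≤ |B - A ^ 5| / (1 / 32) := step1
    _ = 32 * |B - A ^ 5| := by ring
    _ ≤ 32 * (C₂ / L + 26 * (cbar * C₁ / L)) := by linarith
    _ = 32 * (C₂ + 26 * (cbar * C₁)) / L := by field_simp
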